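/- The symmetric decreasing rearrangement preserves the modulus of continuity: if f : ℝ → [0,∞) is continuous with compact support and |f(x) − f(y)| ≤ ω(|x−y|) for a modulus of continuity ω, then the symmetric decreasing rearrangement f* satisfies |f*(x) − f*(y)| ≤ ω(|x−y|) for all x, y. -/

import Mathlib

open MeasureTheory

noncomputable def sdr (f : ℝ → ℝ) (x : ℝ) : ℝ :=
  ∫ t in Set.Ioi (0:ℝ),
    if 2 * |x| < (volume {y : ℝ | t < f y}).toReal then (1:ℝ) else 0

open Set

lemma sdr_aux (f : ℝ → ℝ) (hfc : Continuous f) (hfs : HasCompactSupport f)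
    (ω : ℝ → ℝ) (hωmono : Monotone ω)
    (hmod : ∀ x y, |f x - f y| ≤ ω |x - y|)
    (t1 t2 δ : ℝ) (ht2 : 0 < t2) (hlt : t1 + ω δ < t2) (hδ : 0 < δ)
    (hne : Set.Nonempty {z : ℝ | t2 < f z}) :
    volume {z : ℝ | t2 < f z} + ENNReal.ofReal (2*δ) ≤ volume {z : ℝ | t1 < f z} := by
  set U : Set ℝ := {z | t2 < f z} with hU
  set V : Set ℝ := {z | t1 < f z} with hV
  have hUb : Bornology.IsBounded U := by
    refine hfs.isBounded.subset fun z hz => subset_tsupport f ?_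
    simp only [hU, mem_setOf_eq] at hz
    simp only [Function.mem_support]
    intro h0
    rw [h0] at hz; linarith
  have hba : BddAbove U := hUb.bddAbove
  have hbb : BddBelow U := hUb.bddBelow
  set b := sSup U with hb
  set a := sInf U with ha
  have hab : a ≤ b := csInf_le_csSup hne hbb hba
  have hUab : U ⊆ Icc a b := fun z hz => ⟨csInf_le hbb hz, le_csSup hba hz⟩
  have hmod' : ∀ u z : ℝ, u ∈ U → |z - u| ≤ δ → z ∈ V := by
    intro u z hu hd
    have h1 : f u - f z ≤ ω |u - z| := le_trans (le_abs_self _) (hmod u z)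
    have h2 : ω |u - z| ≤ ω δ := hωmono (by rwa [abs_sub_comm])
    have hu' : t2 < f u := hu
    simp only [hV, mem_setOf_eq]
    linarith
  have h1 : Ioo b (b+δ) ⊆ V := by
    intro z hz
    obtain ⟨u, hu, hu2⟩ := exists_lt_of_lt_csSup hne (show z - δ < b by linarith [hz.2])
    have hub : u ≤ b := le_csSup hba hu
    exact hmod' u z hu (abs_le.mpr ⟨by linarith [hz.1], by linarith⟩)
  have h2 : Ioo (a-δ) a ⊆ V := by
    intro z hz
    obtain ⟨u, hu, hu2⟩ := exists_lt_of_csInf_lt hne (show a < z + δ by linarith [hz.1])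
    have hua : a ≤ u := csInf_le hbb hu
    exact hmod' u z hu (abs_le.mpr ⟨by linarith, by linarith [hz.2]⟩)
  have hUV : U ⊆ V := fun z hz => hmod' z z hz (by simp [abs_nonneg, le_of_lt hδ])
  have hUmeas : MeasurableSet U := (isOpen_lt continuous_const hfc).measurableSet
  have hd1 : Disjoint U (Ioo b (b+δ)) := by
    rw [Set.disjoint_left]
    intro z hz hz'
    exact absurd (hUab hz).2 (not_le.mpr hz'.1)
  have hd2 : Disjoint (Ioo (a-δ) a) (U ∪ Ioo b (b+δ)) := by
    rw [Set.disjoint_left]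
    intro z hz hz'
    rcases hz' with h | h
    · exact absurd (hUab h).1 (not_le.mpr hz.2)
    · linarith [hz.2, h.1]
  have hsub : Ioo (a-δ) a ∪ (U ∪ Ioo b (b+δ)) ⊆ V :=
    union_subset h2 (union_subset hUV h1)
  calc volume U + ENNReal.ofReal (2*δ)
      = ENNReal.ofReal δ + (volume U + ENNReal.ofReal δ) := by
        rw [show (2:ℝ)*δ = δ + δ by ring, ENNReal.ofReal_add hδ.le hδ.le]
        ring
    _ = volume (Ioo (a-δ) a) + (volume U + volume (Ioo b (b+δ))) := by
        rw [Real.volume_Ioo, Real.volume_Ioo]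
        congr 2 <;> ring_nf
    _ = volume (Ioo (a-δ) a ∪ (U ∪ Ioo b (b+δ))) := by
        rw [measure_union hd2 (hUmeas.union measurableSet_Ioo),
          measure_union hd1 measurableSet_Ioo]
    _ ≤ volume V := measure_mono hsub

theorem sdr_preserves_modulus_of_continuity (f : ℝ → ℝ)
    (hfc : Continuous f) (hfs : HasCompactSupport f) (hf0 : ∀ x, 0 ≤ f x)
    (ω : ℝ → ℝ) (hω0 : ∀ t, 0 ≤ ω t) (hωmono : Monotone ω)
    (hωlim : Filter.Tendsto ω (nhdsWithin 0 (Set.Ioi 0)) (nhds 0))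
    (hmod : ∀ x y, |f x - f y| ≤ ω |x - y|) :
    ∀ x y, |sdr f x - sdr f y| ≤ ω |x - y| := by
  set g : ℝ → ℝ := fun t => (volume {y : ℝ | t < f y}).toReal with hg
  have hsub : ∀ t : ℝ, 0 < t → {y : ℝ | t < f y} ⊆ tsupport f := by
    intro t ht z hz
    refine subset_tsupport f ?_
    simp only [Function.mem_support]
    intro h0
    simp only [mem_setOf_eq, h0] at hz; linarith
  have hfin : ∀ t : ℝ, 0 < t → volume {y : ℝ | t < f y} ≠ ⊤ :=
    fun t ht => ((measure_mono (hsub t ht)).trans_lt hfs.measure_lt_top).ne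
  obtain ⟨M, hM⟩ : ∃ M : ℝ, ∀ z, f z ≤ M := by
    obtain ⟨M, hM⟩ := hfc.bddAbove_range_of_hasCompactSupport hfs
    exact ⟨M, fun z => hM ⟨z, rfl⟩⟩
  have hganti : ∀ s t : ℝ, 0 < s → s ≤ t → g t ≤ g s := by
    intro s t hs hst
    exact ENNReal.toReal_mono (hfin s hs)
      (measure_mono fun z hz => lt_of_le_of_lt hst hz)
  -- the sets
  set S : ℝ → Set ℝ := fun r => {t : ℝ | 0 < t ∧ 2*r < g t} with hS
  have hSmeas : ∀ r : ℝ, MeasurableSet (S r) := by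
    intro r
    refine Set.OrdConnected.measurableSet ⟨?_⟩
    rintro t1 ⟨ht1, hgt1⟩ t2 ⟨ht2, hgt2⟩ t ⟨h1, h2⟩
    exact ⟨lt_of_lt_of_le ht1 h1, lt_of_lt_of_le hgt2 (hganti t t2 (lt_of_lt_of_le ht1 h1) h2)⟩
  have hSsub : ∀ r : ℝ, 0 ≤ r → S r ⊆ Ioc 0 M := by
    rintro r hr t ⟨ht, hgt⟩
    refine ⟨ht, ?_⟩
    by_contra hMt
    push_neg at hMt
    have : {y : ℝ | t < f y} = ∅ := by
      ext z; simp only [mem_setOf_eq, mem_empty_iff_false, iff_false, not_lt]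
      linarith [hM z]
    rw [hg] at hgt
    simp only [this, measure_empty, ENNReal.toReal_zero] at hgt
    linarith
  have hSfin : ∀ r : ℝ, 0 ≤ r → volume (S r) ≠ ⊤ := by
    intro r hr
    refine ((measure_mono (hSsub r hr)).trans_lt ?_).ne
    rw [Real.volume_Ioc]; exact ENNReal.ofReal_lt_top
  have hsdr_eq : ∀ x : ℝ, sdr f x = (volume (S |x|)).toReal := by
    intro x
    have hBsub : S |x| ⊆ Ioi 0 := fun t ht => ht.1
    rw [sdr]
    rw [show (fun t => if 2 * |x| < (volume {y : ℝ | t < f y}).toReal then (1:ℝ) else 0)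
        = fun t => if 2 * |x| < g t then (1:ℝ) else 0 from rfl]
    rw [setIntegral_congr_fun measurableSet_Ioi
      (show EqOn (fun t => if 2 * |x| < g t then (1:ℝ) else 0)
        ((S |x|).indicator fun _ => (1:ℝ)) (Ioi 0) from by
          intro t ht
          simp only [indicator_apply, hS, mem_setOf_eq, mem_Ioi.mp ht, true_and])]
    rw [integral_indicator (hSmeas |x|), setIntegral_const,
      measureReal_restrict_apply (hSmeas |x|), inter_eq_left.mpr hBsub, smul_eq_mul, mul_one]
    rfl
  -- main monotone estimate
  have key : ∀ p q : ℝ, 0 ≤ p → p ≤ q →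
      0 ≤ (volume (S p)).toReal - (volume (S q)).toReal ∧
      (volume (S p)).toReal - (volume (S q)).toReal ≤ ω (q - p) := by
    intro p q hp hpq
    have hq : 0 ≤ q := hp.trans hpq
    have hSqp : S q ⊆ S p := fun t ht => ⟨ht.1, lt_of_le_of_lt (by linarith) ht.2⟩
    have hmono : (volume (S q)).toReal ≤ (volume (S p)).toReal :=
      ENNReal.toReal_mono (hSfin p hp) (measure_mono hSqp)
    refine ⟨by linarith, ?_⟩
    have hdiff : (volume (S p)).toReal - (volume (S q)).toReal
        = (volume (S p \ S q)).toReal := by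
      rw [measure_diff hSqp (hSmeas q).nullMeasurableSet (hSfin q hq),
        ENNReal.toReal_sub_of_le (measure_mono hSqp) (hSfin p hp)]
    rw [hdiff]
    set D := S p \ S q with hD
    rcases Set.eq_empty_or_nonempty D with hDe | hDne
    · rw [hDe]; simpa using hω0 (q - p)
    have hDmem : ∀ t : ℝ, t ∈ D → 0 < t ∧ 2*p < g t ∧ g t ≤ 2*q := by
      rintro t ⟨⟨ht, hgt⟩, htq⟩
      refine ⟨ht, hgt, ?_⟩
      by_contra hc
      exact htq ⟨ht, not_le.mp hc⟩
    have hpq' : p < q := by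
      obtain ⟨t0, ht0⟩ := hDne
      obtain ⟨_, h1, h2⟩ := hDmem t0 ht0
      linarith
    set δ := q - p with hδdef
    have hδ : 0 < δ := by simp [hδdef]; linarith
    set w := ω δ with hw
    have hw0 : 0 ≤ w := hω0 δ
    -- pairwise bound
    have pair : ∀ t1 t2 : ℝ, t1 ∈ D → t2 ∈ D → t2 - t1 ≤ w := by
      intro t1 t2 h1 h2
      obtain ⟨ht1, hg1, hg1'⟩ := hDmem t1 h1
      obtain ⟨ht2, hg2, hg2'⟩ := hDmem t2 h2
      by_contra hc
      push_neg at hc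
      have hlt : t1 + w < t2 := by linarith
      have hne : Set.Nonempty {z : ℝ | t2 < f z} := by
        refine Set.nonempty_iff_ne_empty.mpr fun he => ?_
        rw [hg] at hg2
        simp only [he, measure_empty, ENNReal.toReal_zero] at hg2
        linarith
      have := sdr_aux f hfc hfs ω hωmono hmod t1 t2 δ ht2 hlt hδ hne
      have hfin2 : volume {z : ℝ | t2 < f z} ≠ ⊤ := hfin t2 ht2
      have htr : g t2 + 2*δ ≤ g t1 := by
        have := ENNReal.toReal_mono (hfin t1 ht1) this
        rwa [ENNReal.toReal_add hfin2 ENNReal.ofReal_ne_top,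
          ENNReal.toReal_ofReal (by linarith)] at this
      linarith
    have hbdd : BddBelow D := ⟨0, fun t ht => ((hDmem t ht).1).le⟩
    set c := sInf D with hc
    have hDsub : D ⊆ Icc c (c + w) := by
      intro t ht
      refine ⟨csInf_le hbdd ht, ?_⟩
      by_contra hcc
      push_neg at hcc
      obtain ⟨t1, ht1, ht1'⟩ := exists_lt_of_csInf_lt hDne (show c < t - w by linarith)
      linarith [pair t1 t ht1 ht]
    calc (volume D).toReal ≤ (volume (Icc c (c+w))).toReal := by
          refine ENNReal.toReal_mono ?_ (measure_mono hDsub)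
          rw [Real.volume_Icc]; exact ENNReal.ofReal_ne_top
      _ = w := by rw [Real.volume_Icc]; simp [ENNReal.toReal_ofReal hw0]
  -- conclusion
  intro x y
  rw [hsdr_eq x, hsdr_eq y]
  have habs1 : |x| - |y| ≤ |x - y| := abs_sub_abs_le_abs_sub x y
  have habs2 : |y| - |x| ≤ |x - y| := by
    rw [abs_sub_comm]; exact abs_sub_abs_le_abs_sub y x
  rcases le_total (|x|) (|y|) with h | h
  · obtain ⟨h1, h2⟩ := key (|x|) (|y|) (abs_nonneg x) h
    rw [abs_of_nonneg h1]
    exact h2.trans (hωmono habs2)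
  · obtain ⟨h1, h2⟩ := key (|y|) (|x|) (abs_nonneg y) h
    rw [abs_sub_comm, abs_of_nonneg h1]
    exact h2.trans (hωmono habs1)
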